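/- Let A be a real symmetric n×n matrix (viewed as a complex matrix) and let P and Q be density matrices. If there is pretty good state transfer from P to Q, then the unital complex subalgebra of n×n matrices generated by A and P equals the unital complex subalgebra generated by A and Q (i.e. Algebra.adjoin ℂ {A, P} = Algebra.adjoin ℂ {A, Q}). -/

import Mathlib

open Matrix
open scoped ComplexOrder

/-- The transition matrix `U(t) = exp(itA)`. -/
noncomputable def U {n : ℕ} (A : Matrix (Fin n) (Fin n) ℂ) (t : ℝ) :
    Matrix (Fin n) (Fin n) ℂ :=
  NormedSpace.exp (((t : ℂ) * Complex.I) • A)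

/-- The Frobenius norm of a complex matrix. -/
noncomputable def fnorm {n : ℕ} (M : Matrix (Fin n) (Fin n) ℂ) : ℝ :=
  Real.sqrt (∑ i, ∑ j, ‖M i j‖ ^ 2)

namespace Stmt7Aux

variable {n : ℕ}

lemma subalg_isClosed (S : Subalgebra ℂ (Matrix (Fin n) (Fin n) ℂ)) :
    IsClosed (S : Set (Matrix (Fin n) (Fin n) ℂ)) :=
  Submodule.closed_of_finiteDimensional (Subalgebra.toSubmodule S)

lemma exp_mem (S : Subalgebra ℂ (Matrix (Fin n) (Fin n) ℂ))
    {x : Matrix (Fin n) (Fin n) ℂ} (hx : x ∈ S) :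
    NormedSpace.exp x ∈ S := by
  rw [NormedSpace.exp_eq_tsum (𝕂 := ℂ)]
  show (∑' k : ℕ, ((k.factorial : ℂ))⁻¹ • x ^ k) ∈ S
  by_cases h : Summable fun k : ℕ => ((k.factorial : ℂ))⁻¹ • x ^ k
  · refine (subalg_isClosed S).mem_of_tendsto h.hasSum
      (Filter.Eventually.of_forall fun s => ?_)
    exact Subalgebra.sum_mem S fun k _ => Subalgebra.smul_mem S (Subalgebra.pow_mem S hx k) _
  · rw [tsum_eq_zero_of_not_summable h]
    exact Subalgebra.zero_mem S

lemma entry_le_fnorm (M : Matrix (Fin n) (Fin n) ℂ) (i j : Fin n) :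
    ‖M i j‖ ≤ fnorm M := by
  have h1 : ‖M i j‖ = Real.sqrt (‖M i j‖ ^ 2) :=
    (Real.sqrt_sq (norm_nonneg _)).symm
  rw [h1, fnorm]
  apply Real.sqrt_le_sqrt
  calc ‖M i j‖ ^ 2 ≤ ∑ j', ‖M i j'‖ ^ 2 :=
        Finset.single_le_sum (f := fun j' => ‖M i j'‖ ^ 2)
          (fun _ _ => sq_nonneg _) (Finset.mem_univ j)
    _ ≤ ∑ i', ∑ j', ‖M i' j'‖ ^ 2 :=
        Finset.single_le_sum (f := fun i' => ∑ j', ‖M i' j'‖ ^ 2)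
          (fun _ _ => Finset.sum_nonneg fun _ _ => sq_nonneg _) (Finset.mem_univ i)

lemma unitary_entry_le_one {W : Matrix (Fin n) (Fin n) ℂ} (hW : W * Wᴴ = 1)
    (i j : Fin n) : ‖W i j‖ ≤ 1 := by
  have h2 : (1 : ℂ) = ∑ k, ((‖W i k‖ ^ 2 : ℝ) : ℂ) := by
    calc (1 : ℂ) = (W * Wᴴ) i i := by rw [hW]; simp [Matrix.one_apply_eq]
      _ = ∑ k, W i k * star (W i k) := by
          simp [Matrix.mul_apply, Matrix.conjTranspose_apply]
      _ = ∑ k, ((‖W i k‖ ^ 2 : ℝ) : ℂ) := by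
          refine Finset.sum_congr rfl fun k _ => ?_
          rw [Complex.star_def, Complex.mul_conj, ← Complex.sq_norm]
  have h3 : (1 : ℝ) = ∑ k, ‖W i k‖ ^ 2 := by exact_mod_cast h2
  have h4 : ‖W i j‖ ^ 2 ≤ 1 := by
    rw [h3]
    exact Finset.single_le_sum (f := fun k => ‖W i k‖ ^ 2)
      (fun _ _ => sq_nonneg _) (Finset.mem_univ j)
  nlinarith [norm_nonneg (W i j)]

end Stmt7Aux

theorem stmt_7 {n : ℕ} (hn : 1 ≤ n)
    (A : Matrix (Fin n) (Fin n) ℂ)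
    (hAreal : ∀ i j, (A i j).im = 0) (hAsym : Aᵀ = A)
    (P Q : Matrix (Fin n) (Fin n) ℂ)
    (hP : P.PosSemidef) (hPtr : P.trace = 1)
    (hQ : Q.PosSemidef) (hQtr : Q.trace = 1)
    (hpgst : ∀ ε : ℝ, 0 < ε → ∃ t : ℝ, fnorm (U A t * P * U A (-t) - Q) < ε) :
    Algebra.adjoin ℂ ({A, P} : Set (Matrix (Fin n) (Fin n) ℂ)) =
      Algebra.adjoin ℂ ({A, Q} : Set (Matrix (Fin n) (Fin n) ℂ)) := by
  -- A is Hermitian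
  have hAherm : Aᴴ = A := by
    ext i j
    rw [Matrix.conjTranspose_apply]
    have hst : star (A j i) = A j i := by
      rw [Complex.star_def, Complex.conj_eq_iff_im]
      exact hAreal j i
    rw [hst]
    conv_rhs => rw [← hAsym]
    rw [Matrix.transpose_apply]
  -- multiplication law for U
  have hUmul : ∀ s t : ℝ, U A s * U A t = U A (s + t) := by
    intro s t
    have hc : Commute (((s : ℂ) * Complex.I) • A) (((t : ℂ) * Complex.I) • A) :=
      ((Commute.refl A).smul_left _).smul_right _
    have key := Matrix.exp_add_of_commute _ _ hc
    rw [U, U, U, ← key]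
    congr 1
    rw [← add_smul]
    congr 1
    push_cast
    ring
  have hU0 : U A 0 = 1 := by
    rw [U]
    norm_num [NormedSpace.exp_zero]
  have hUinv : ∀ t : ℝ, U A t * U A (-t) = 1 := by
    intro t; rw [hUmul, add_neg_cancel, hU0]
  have hUinv' : ∀ t : ℝ, U A (-t) * U A t = 1 := by
    intro t; rw [hUmul, neg_add_cancel, hU0]
  -- conjTranspose of U
  have hUadj : ∀ t : ℝ, (U A t)ᴴ = U A (-t) := by
    intro t
    have key := Matrix.exp_conjTranspose (((t : ℂ) * Complex.I) • A)
    rw [U, U, ← key]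
    congr 1
    rw [Matrix.conjTranspose_smul, hAherm]
    congr 1
    simp [Complex.ext_iff]
  -- entries of U bounded by 1
  have hUbd : ∀ t : ℝ, ∀ i j, ‖U A t i j‖ ≤ 1 := by
    intro t
    apply Stmt7Aux.unitary_entry_le_one
    rw [hUadj, hUinv]
  -- U A t ∈ any subalgebra containing A
  have hUmem : ∀ (S : Subalgebra ℂ (Matrix (Fin n) (Fin n) ℂ)), A ∈ S → ∀ t, U A t ∈ S := by
    intro S hA t
    exact Stmt7Aux.exp_mem S (Subalgebra.smul_mem S hA _)
  -- a sequence of times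
  have hseq : ∀ k : ℕ, ∃ t : ℝ, fnorm (U A t * P * U A (-t) - Q) < 1 / (k + 1) := by
    intro k
    exact hpgst _ (by positivity)
  choose t ht using hseq
  set SP := Algebra.adjoin ℂ ({A, P} : Set (Matrix (Fin n) (Fin n) ℂ)) with hSP
  set SQ := Algebra.adjoin ℂ ({A, Q} : Set (Matrix (Fin n) (Fin n) ℂ)) with hSQ
  have hA_P : A ∈ SP := Algebra.subset_adjoin (Set.mem_insert _ _)
  have hP_P : P ∈ SP := Algebra.subset_adjoin (Set.mem_insert_of_mem _ rfl)
  have hA_Q : A ∈ SQ := Algebra.subset_adjoin (Set.mem_insert _ _)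
  have hQ_Q : Q ∈ SQ := Algebra.subset_adjoin (Set.mem_insert_of_mem _ rfl)
  have hlim : Filter.Tendsto (fun k : ℕ => 1 / ((k : ℝ) + 1)) Filter.atTop (nhds 0) :=
    tendsto_one_div_add_atTop_nhds_zero_nat
  -- Q ∈ SP
  have hQmem : Q ∈ SP := by
    refine (Stmt7Aux.subalg_isClosed SP).mem_of_tendsto
      (f := fun k => U A (t k) * P * U A (-(t k))) (b := Filter.atTop)
      ?_ (Filter.Eventually.of_forall fun k =>
        Subalgebra.mul_mem _ (Subalgebra.mul_mem _ (hUmem SP hA_P _) hP_P) (hUmem SP hA_P _))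
    refine tendsto_pi_nhds.mpr fun i => tendsto_pi_nhds.mpr fun j => ?_
    rw [tendsto_iff_dist_tendsto_zero]
    refine squeeze_zero (fun k => dist_nonneg) (g := fun k : ℕ => 1 / ((k : ℝ) + 1)) ?_ hlim
    intro k
    have h1 := Stmt7Aux.entry_le_fnorm (U A (t k) * P * U A (-(t k)) - Q) i j
    simp only [Matrix.sub_apply] at h1
    calc dist ((U A (t k) * P * U A (-(t k))) i j) (Q i j)
        = ‖(U A (t k) * P * U A (-(t k))) i j - Q i j‖ := Complex.dist_eq _ _
      _ ≤ fnorm (U A (t k) * P * U A (-(t k)) - Q) := h1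
      _ ≤ 1 / (k + 1) := le_of_lt (ht k)
  -- P ∈ SQ
  have hPmem : P ∈ SQ := by
    have hrw : ∀ k : ℕ, U A (-(t k)) * Q * U A (t k)
        = P - U A (-(t k)) * (U A (t k) * P * U A (-(t k)) - Q) * U A (t k) := by
      intro k
      have e : U A (-(t k)) * (U A (t k) * P * U A (-(t k))) * U A (t k)
          = (U A (-(t k)) * U A (t k)) * P * (U A (-(t k)) * U A (t k)) := by
        noncomm_ring
      rw [mul_sub, sub_mul, e, hUinv', one_mul, mul_one, sub_sub_cancel]
    refine (Stmt7Aux.subalg_isClosed SQ).mem_of_tendsto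
      (f := fun k => U A (-(t k)) * Q * U A (t k)) (b := Filter.atTop)
      ?_ (Filter.Eventually.of_forall fun k =>
        Subalgebra.mul_mem _ (Subalgebra.mul_mem _ (hUmem SQ hA_Q _) hQ_Q) (hUmem SQ hA_Q _))
    refine tendsto_pi_nhds.mpr fun i => tendsto_pi_nhds.mpr fun j => ?_
    rw [tendsto_iff_dist_tendsto_zero]
    refine squeeze_zero (fun k => dist_nonneg)
      (g := fun k : ℕ => (n : ℝ) ^ 2 * (1 / ((k : ℝ) + 1))) ?_
      (by simpa using hlim.const_mul ((n : ℝ) ^ 2))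
    intro k
    set M := U A (t k) * P * U A (-(t k)) - Q with hM
    have hMbd : ∀ a b, ‖M a b‖ ≤ 1 / (k + 1) :=
      fun a b => le_of_lt (lt_of_le_of_lt (Stmt7Aux.entry_le_fnorm M a b) (ht k))
    have hexpand : (U A (-(t k)) * M * U A (t k)) i j
        = ∑ m, ∑ l, U A (-(t k)) i l * M l m * U A (t k) m j := by
      simp only [Matrix.mul_apply, Finset.sum_mul]
    have hentry : ‖(U A (-(t k)) * M * U A (t k)) i j‖
        ≤ (n : ℝ) ^ 2 * (1 / ((k : ℝ) + 1)) := by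
      rw [hexpand]
      calc ‖∑ m, ∑ l, U A (-(t k)) i l * M l m * U A (t k) m j‖
          ≤ ∑ m, ∑ l, ‖U A (-(t k)) i l * M l m * U A (t k) m j‖ :=
            (norm_sum_le _ _).trans
              (Finset.sum_le_sum fun m _ => norm_sum_le _ _)
        _ ≤ ∑ _m : Fin n, ∑ _l : Fin n, 1 / ((k : ℝ) + 1) := by
            refine Finset.sum_le_sum fun m _ => Finset.sum_le_sum fun l _ => ?_
            rw [norm_mul, norm_mul]
            calc ‖U A (-(t k)) i l‖ * ‖M l m‖
                  * ‖U A (t k) m j‖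
                ≤ 1 * (1 / ((k : ℝ) + 1)) * 1 := by
                  gcongr
                  · exact hUbd _ _ _
                  · exact hMbd _ _
                  · exact hUbd _ _ _
              _ = 1 / ((k : ℝ) + 1) := by ring
        _ = (n : ℝ) ^ 2 * (1 / ((k : ℝ) + 1)) := by
            simp [Finset.sum_const, Finset.card_univ]
            ring
    have harg : (U A (-(t k)) * Q * U A (t k)) i j - P i j
        = -((U A (-(t k)) * M * U A (t k)) i j) := by
      rw [hrw k]
      simp [Matrix.sub_apply, hM]
    calc dist ((U A (-(t k)) * Q * U A (t k)) i j) (P i j)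
        = ‖(U A (-(t k)) * Q * U A (t k)) i j - P i j‖ := Complex.dist_eq _ _
      _ = ‖(U A (-(t k)) * M * U A (t k)) i j‖ := by rw [harg, norm_neg]
      _ ≤ (n : ℝ) ^ 2 * (1 / ((k : ℝ) + 1)) := hentry
  apply le_antisymm
  · rw [hSP]
    apply Algebra.adjoin_le
    intro x hx
    rcases hx with rfl | hx
    · exact hA_Q
    · rw [Set.mem_singleton_iff] at hx; subst hx; exact hPmem
  · rw [hSQ]
    apply Algebra.adjoin_le
    intro x hx
    rcases hx with rfl | hx
    · exact hA_P
    · rw [Set.mem_singleton_iff] at hx; subst hx; exact hQmem
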